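/- Take d₁ = d₂ = σ = 1, f₁(u) = u(4 - u), f₂(u) = u(4 - u)(u - 1) (so K₁ = K₂ = 4, θ = 1). Then there is no ξ ∈ (0, 4] simultaneously satisfying ∫_0^ξ f₂(s) ds ≤ 0, ∫_ξ^4 f₁(s) ds = -∫_0^ξ f₂(s) ds, and ξ ≤ θ*, where θ* ∈ (1,4) is the unique number in (1,4) with ∫_0^{θ*} f₂(s) ds = 0. -/

import Mathlib

open Real Filter Set MeasureTheory

lemma int1 (ξ : ℝ) : (∫ s in (0:ℝ)..ξ, s * (4 - s) * (s - 1)) = -ξ^4/4 + 5*ξ^3/3 - 2*ξ^2 := by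
  have h := intervalIntegral.integral_eq_sub_of_hasDerivAt
    (f := fun s : ℝ => -s^4/4 + 5*s^3/3 - 2*s^2)
    (f' := fun s : ℝ => s * (4 - s) * (s - 1)) (a := 0) (b := ξ)
    (fun x _ => by
      have h1 : HasDerivAt (fun s : ℝ => -s^4/4 + 5*s^3/3 - 2*s^2)
          (-(4*x^3)/4 + 5*(3*x^2)/3 - 2*(2*x)) x := by
        refine HasDerivAt.sub (HasDerivAt.add ?_ ?_) ?_
        · simpa using ((hasDerivAt_pow 4 x).neg).div_const 4
        · simpa using ((hasDerivAt_pow 3 x).const_mul 5).div_const 3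
        · simpa using (hasDerivAt_pow 2 x).const_mul 2
      exact h1.congr_deriv (by ring))
    (by apply Continuous.intervalIntegrable; continuity)
  rw [h]; ring

lemma int2 (ξ : ℝ) : (∫ s in ξ..(4:ℝ), s * (4 - s)) = 32/3 - 2*ξ^2 + ξ^3/3 := by
  have h := intervalIntegral.integral_eq_sub_of_hasDerivAt
    (f := fun s : ℝ => 2*s^2 - s^3/3)
    (f' := fun s : ℝ => s * (4 - s)) (a := ξ) (b := 4)
    (fun x _ => by
      have h1 : HasDerivAt (fun s : ℝ => 2*s^2 - s^3/3) (2*(2*x) - (3*x^2)/3) x := by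
        refine HasDerivAt.sub ?_ ?_
        · simpa using (hasDerivAt_pow 2 x).const_mul 2
        · simpa using (hasDerivAt_pow 3 x).div_const 3
      exact h1.congr_deriv (by ring))
    (by apply Continuous.intervalIntegrable; continuity)
  rw [h]; ring

/-- Explicit nonexistence example: with `d₁ = d₂ = σ = 1`, `f₁(u) = u(4-u)`,
`f₂(u) = u(4-u)(u-1)`, the matching conditions for a stationary solution
connecting `K₁ = 4` to `0` are incompatible. -/
theorem no_matching_value_explicit_example :
    ∀ θs : ℝ, θs ∈ Set.Ioo (1:ℝ) 4 →
      (∫ s in (0:ℝ)..θs, s * (4 - s) * (s - 1)) = 0 →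
      ¬ ∃ ξ : ℝ, ξ ∈ Set.Ioc (0:ℝ) 4 ∧
        (∫ s in (0:ℝ)..ξ, s * (4 - s) * (s - 1)) ≤ 0 ∧
        (∫ s in ξ..4, s * (4 - s)) = -(∫ s in (0:ℝ)..ξ, s * (4 - s) * (s - 1)) ∧
        ξ ≤ θs := by
  rintro θs hθ _ ⟨ξ, ⟨hξ0, hξ4⟩, _, hmatch, _⟩
  rw [int1, int2] at hmatch
  have h2 : 0 ≤ ξ*(4-ξ) := mul_nonneg hξ0.le (by linarith)
  have h1 : ξ*(4-ξ) ≤ 4 := by nlinarith [sq_nonneg (ξ-2)]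
  have h3 : (ξ*(4-ξ))^2 ≤ 16 := by nlinarith
  nlinarith [h3]
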